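/- Let Γ be a simple graph of order n and size m. Then every global dual alliance S in Γ satisfies |S| ≥ ⌈√(2m+n)/2⌉; in particular the global dual alliance number satisfies γ_{a_d}(Γ) ≥ ⌈√(2m+n)/2⌉. -/

import Mathlib

open Finset SimpleGraph

/-- `μ` is the second smallest (counted with multiplicity) value of the family `e`. -/
def IsSecondSmallest {ι : Type*} (e : ι → ℝ) (μ : ℝ) : Prop :=
  ∃ i₀ i₁ : ι, i₀ ≠ i₁ ∧ e i₀ ≤ μ ∧ e i₁ = μ ∧ ∀ j : ι, j ≠ i₀ → μ ≤ e j

/-- `lam` is the largest value of the family `e`. -/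
def IsLargest {ι : Type*} (e : ι → ℝ) (lam : ℝ) : Prop :=
  (∃ i : ι, e i = lam) ∧ ∀ i : ι, e i ≤ lam

theorem stmt_16 {V : Type*} [Fintype V] [DecidableEq V]
    (G : SimpleGraph V) [DecidableRel G.Adj]
    (n : ℕ) (hn : Fintype.card V = n)
    (m : ℕ) (hm : G.edgeFinset.card = m)
    (S : Finset V) (hS : S.Nonempty)
    (hdef : ∀ v ∈ S, (G.neighborFinset v \ S).card ≤ (G.neighborFinset v ∩ S).card + 1)
    (hoff : ∀ v ∉ S, (G.neighborFinset v \ S).card + 1 ≤ (G.neighborFinset v ∩ S).card)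
    :
    ⌈Real.sqrt (2 * (m : ℝ) + n) / 2⌉ ≤ (S.card : ℤ) := by
  classical
  set s := S.card with hs
  -- abbreviations
  set A := ∑ v ∈ S, (G.neighborFinset v ∩ S).card with hA
  set B := ∑ v ∈ S, (G.neighborFinset v \ S).card with hB
  set A' := ∑ v ∈ Sᶜ, (G.neighborFinset v ∩ S).card with hA'
  set B' := ∑ v ∈ Sᶜ, (G.neighborFinset v \ S).card with hB'
  have hdeg : ∀ v, G.degree v
      = (G.neighborFinset v ∩ S).card + (G.neighborFinset v \ S).card := by
    intro v
    rw [SimpleGraph.degree, ← Finset.card_inter_add_card_sdiff (G.neighborFinset v) S]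
  -- 2*m = A + B + A' + B'
  have hsum : 2 * m = (A + B) + (A' + B') := by
    rw [← hm, ← SimpleGraph.sum_degrees_eq_twice_card_edges]
    rw [← Finset.sum_add_sum_compl S (fun v => G.degree v)]
    simp only [hdeg, hA, hB, hA', hB', Finset.sum_add_distrib]
  -- double counting: B = A'
  have hdc : B = A' := by
    have h1 : ∀ v, G.neighborFinset v \ S = Sᶜ.filter (fun u => G.Adj v u) := by
      intro v; ext u
      simp [Finset.mem_sdiff, SimpleGraph.mem_neighborFinset, Finset.mem_filter,
        Finset.mem_compl, and_comm]
    have h2 : ∀ u, G.neighborFinset u ∩ S = S.filter (fun v => G.Adj u v) := by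
      intro u; ext v
      simp [Finset.mem_inter, SimpleGraph.mem_neighborFinset, Finset.mem_filter, and_comm]
    rw [hB, hA']
    simp only [h1, h2, Finset.card_filter]
    rw [Finset.sum_comm]
    congr 1; ext u; congr 1; ext v
    simp [G.adj_comm]
  -- B ≤ A + s
  have hBA : B ≤ A + s := by
    calc B ≤ ∑ v ∈ S, ((G.neighborFinset v ∩ S).card + 1) :=
          Finset.sum_le_sum hdef
      _ = A + s := by rw [Finset.sum_add_distrib, Finset.sum_const, smul_eq_mul, mul_one]
  -- B' + |Sᶜ| ≤ A'
  have hB'A' : B' + Sᶜ.card ≤ A' := by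
    have : ∑ v ∈ Sᶜ, ((G.neighborFinset v \ S).card + 1) ≤ A' :=
      Finset.sum_le_sum (fun v hv => hoff v (Finset.mem_compl.mp hv))
    rwa [Finset.sum_add_distrib, Finset.sum_const, smul_eq_mul, mul_one] at this
  -- A ≤ s * (s-1)
  obtain ⟨t, ht⟩ : ∃ t, s = t + 1 := ⟨s - 1, by have := Finset.card_pos.mpr hS; omega⟩
  have hAst : A ≤ s * t := by
    calc A ≤ ∑ _v ∈ S, t := by
          apply Finset.sum_le_sum
          intro v hv
          have hsub : G.neighborFinset v ∩ S ⊆ S.erase v := by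
            intro u hu
            rw [Finset.mem_erase]
            rw [Finset.mem_inter, SimpleGraph.mem_neighborFinset] at hu
            exact ⟨G.ne_of_adj (G.adj_symm hu.1), hu.2⟩
          have := Finset.card_le_card hsub
          rw [Finset.card_erase_of_mem hv] at this
          omega
      _ = s * t := by rw [Finset.sum_const, smul_eq_mul]
  have hnc : s + Sᶜ.card = n := by rw [← hn, Finset.card_add_card_compl]
  -- key inequality
  have key : 2 * m + n ≤ 4 * s * s := by
    have : 2 * m + n = A + B + A' + B' + s + Sᶜ.card := by omega
    have h4 : A + B + A' + B' + s + Sᶜ.card ≤ 4 * A + 4 * s := by omega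
    have h5 : 4 * A + 4 * s ≤ 4 * (s * t) + 4 * s := by omega
    have h6 : 4 * (s * t) + 4 * s ≤ 4 * s * s := by rw [ht]; nlinarith
    omega
  -- real analysis part
  have hcast : (2 * (m : ℝ) + n) ≤ ((2 * s : ℕ) : ℝ) ^ 2 := by
    have : ((2 * m + n : ℕ) : ℝ) ≤ ((4 * s * s : ℕ) : ℝ) := by exact_mod_cast key
    push_cast at this ⊢
    nlinarith
  have hsqrt : Real.sqrt (2 * (m : ℝ) + n) ≤ 2 * s := by
    calc Real.sqrt (2 * (m : ℝ) + n) ≤ Real.sqrt (((2 * s : ℕ) : ℝ) ^ 2) :=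
          Real.sqrt_le_sqrt hcast
      _ = ((2 * s : ℕ) : ℝ) := Real.sqrt_sq (by positivity)
      _ = 2 * s := by push_cast; ring
  rw [Int.ceil_le]
  push_cast
  linarith
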